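/- arXiv:1601.08008 — 3 statements merged into one kernel-verified Lean document; each statement's English description precedes it below -/
import Mathlib

section
/- For fixed t > 0 and g ∈ L¹([0,t]), the function h(k,t) := ∫₀ᵗ e^{ik²(τ−t)} g(τ) dτ tends to 0 as |k| → ∞ within the open quadrant {k ∈ ℂ : Re k > 0, Im k < 0}. -/
open MeasureTheory Filter intervalIntegral

lemma exp_bound {z : ℂ} (hz : z.im ≤ 0) {t τ : ℝ} (hτ : τ ≤ t) :
    ‖Complex.exp (Complex.I * z * ((τ:ℂ) - (t:ℂ)))‖ ≤ 1 := by
  rw [Complex.norm_exp]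
  have h : (Complex.I * z * ((τ:ℂ) - (t:ℂ))).re = (-z.im) * (τ - t) := by
    simp [Complex.mul_re, Complex.mul_im]
  calc Real.exp (Complex.I * z * ((τ:ℂ) - (t:ℂ))).re
      ≤ Real.exp 0 := Real.exp_le_exp.2 (by
        rw [h]; exact mul_nonpos_of_nonneg_of_nonpos (by linarith) (by linarith))
    _ = 1 := Real.exp_zero

lemma key_bound {t : ℝ} (ht : 0 ≤ t) (φ φ' : ℝ → ℂ)
    (hd : ∀ x : ℝ, HasDerivAt φ (φ' x) x) (hc : Continuous φ')
    {z : ℂ} (hz : z.im ≤ 0) (hz0 : z ≠ 0) :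
    ‖∫ τ in (0:ℝ)..t, Complex.exp (Complex.I * z * ((τ:ℂ) - (t:ℂ))) * φ τ‖
      ≤ (‖φ t‖ + ‖φ 0‖ + ∫ τ in (0:ℝ)..t, ‖φ' τ‖) / ‖z‖ := by
  have hIz : Complex.I * z ≠ 0 := mul_ne_zero Complex.I_ne_zero hz0
  set E : ℝ → ℂ := fun τ => Complex.exp (Complex.I * z * ((τ:ℂ) - (t:ℂ))) with hE
  set v : ℝ → ℂ := fun τ => E τ / (Complex.I * z) with hv
  have hvd : ∀ x : ℝ, HasDerivAt v (E x) x := by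
    intro x
    have h0 : HasDerivAt (fun τ : ℝ => ((τ:ℂ) - (t:ℂ))) 1 x := by
      simpa using (Complex.ofRealCLM.hasDerivAt (x := x)).sub_const (t:ℂ)
    have h1 : HasDerivAt (fun τ : ℝ => Complex.I * z * ((τ:ℂ) - (t:ℂ))) (Complex.I * z) x := by
      simpa using h0.const_mul (Complex.I * z)
    have h2 : HasDerivAt E (Complex.exp (Complex.I * z * ((x:ℂ) - (t:ℂ))) * (Complex.I * z)) x :=
      h1.cexp
    have h3 := h2.div_const (Complex.I * z)
    simpa [hE, mul_div_assoc, mul_div_cancel_right₀ _ hIz] using h3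
  have hEc : Continuous E := by
    apply Complex.continuous_exp.comp
    exact (continuous_const.mul ((Complex.continuous_ofReal).sub continuous_const))
  have hvc : Continuous v := hEc.div_const _
  have hparts := integral_mul_deriv_eq_deriv_mul (a := 0) (b := t)
      (u := φ) (v := v) (u' := φ') (v' := E)
      (fun x _ => hd x) (fun x _ => hvd x)
      (hc.intervalIntegrable 0 t) (hEc.intervalIntegrable 0 t)
  have hmain : (∫ τ in (0:ℝ)..t, E τ * φ τ)
      = φ t * v t - φ 0 * v 0 - ∫ x in (0:ℝ)..t, φ' x * v x := by
    rw [← hparts]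
    congr 1; ext τ; ring
  have hzpos : (0:ℝ) < ‖z‖ := norm_pos_iff.2 hz0
  have hvnorm : ∀ τ : ℝ, τ ≤ t → ‖v τ‖ ≤ 1 / ‖z‖ := by
    intro τ hτ
    rw [hv]
    simp only [norm_div, norm_mul, Complex.norm_I, one_mul]
    gcongr
    exact exp_bound hz hτ
  have hC : ‖∫ x in (0:ℝ)..t, φ' x * v x‖ ≤ (∫ x in (0:ℝ)..t, ‖φ' x‖) / ‖z‖ := by
    refine (intervalIntegral.norm_integral_le_integral_norm ht).trans ?_
    have step : (∫ x in (0:ℝ)..t, ‖φ' x * v x‖) ≤ ∫ x in (0:ℝ)..t, ‖φ' x‖ * (1 / ‖z‖) := by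
      apply intervalIntegral.integral_mono_on ht
        ((hc.mul hvc).norm.intervalIntegrable 0 t)
        ((hc.norm.mul continuous_const).intervalIntegrable 0 t)
      intro x hx
      rw [Pi.mul_apply, norm_mul]
      exact mul_le_mul_of_nonneg_left (hvnorm x hx.2) (norm_nonneg _)
    refine step.trans ?_
    rw [intervalIntegral.integral_mul_const, mul_one_div]
  calc ‖∫ τ in (0:ℝ)..t, E τ * φ τ‖
      = ‖φ t * v t - φ 0 * v 0 - ∫ x in (0:ℝ)..t, φ' x * v x‖ := by rw [hmain]
    _ ≤ ‖φ t * v t - φ 0 * v 0‖ + ‖∫ x in (0:ℝ)..t, φ' x * v x‖ := norm_sub_le _ _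
    _ ≤ (‖φ t * v t‖ + ‖φ 0 * v 0‖) + ‖∫ x in (0:ℝ)..t, φ' x * v x‖ := by
        gcongr; exact norm_sub_le _ _
    _ ≤ (‖φ t‖ / ‖z‖ + ‖φ 0‖ / ‖z‖) + (∫ x in (0:ℝ)..t, ‖φ' x‖) / ‖z‖ := by
        have hA : ‖φ t * v t‖ ≤ ‖φ t‖ / ‖z‖ := by
          rw [norm_mul, ← mul_one_div]
          exact mul_le_mul_of_nonneg_left (hvnorm t le_rfl) (norm_nonneg _)
        have hB : ‖φ 0 * v 0‖ ≤ ‖φ 0‖ / ‖z‖ := by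
          rw [norm_mul, ← mul_one_div]
          exact mul_le_mul_of_nonneg_left (hvnorm 0 ht) (norm_nonneg _)
        linarith
    _ = (‖φ t‖ + ‖φ 0‖ + ∫ τ in (0:ℝ)..t, ‖φ' τ‖) / ‖z‖ := by rw [add_div, add_div]

/-- For fixed `t > 0` and `g ∈ L¹([0,t])`, the function
`h(k,t) = ∫₀ᵗ e^{ik²(τ-t)} g(τ) dτ` tends to `0` as `|k| → ∞` within the open
quadrant `{Re k > 0, Im k < 0}`. -/
theorem h_decay_in_quadrant (t : ℝ) (ht : 0 < t) (g : ℝ → ℂ)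
    (hg : IntegrableOn g (Set.Icc 0 t)) :
    Tendsto
      (fun k : ℂ => ∫ τ in (0:ℝ)..t,
        Complex.exp (Complex.I * k ^ 2 * ((τ : ℂ) - (t : ℂ))) * g τ)
      (Bornology.cobounded ℂ ⊓ Filter.principal {k : ℂ | 0 < k.re ∧ k.im < 0})
      (nhds 0) := by
  rw [NormedAddCommGroup.tendsto_nhds_zero]
  intro ε hε
  have ht0 : (0:ℝ) ≤ t := ht.le
  set f : ℝ → ℂ := Set.indicator (Set.Icc 0 t) g with hfdef
  have hfi : Integrable f := (integrable_indicator_iff measurableSet_Icc).2 hg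
  obtain ⟨f₀, hf₀supp, hf₀close, hf₀cont, hf₀int⟩ :=
    hfi.exists_hasCompactSupport_integral_sub_le (show (0:ℝ) < ε/4 by linarith)
  set δ : ℝ := ε / (8 * (t+1)) with hδdef
  have hδpos : 0 < δ := by positivity
  obtain ⟨p, hp⟩ := exists_polynomial_near_of_continuousOn 0 t (fun x => (f₀ x).re)
      (Complex.continuous_re.comp hf₀cont).continuousOn δ hδpos
  obtain ⟨q, hq⟩ := exists_polynomial_near_of_continuousOn 0 t (fun x => (f₀ x).im)
      (Complex.continuous_im.comp hf₀cont).continuousOn δ hδpos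
  set φ : ℝ → ℂ := fun x => ((p.eval x : ℝ) : ℂ) + ((q.eval x : ℝ) : ℂ) * Complex.I with hφdef
  set φ' : ℝ → ℂ := fun x => ((p.derivative.eval x : ℝ) : ℂ)
      + ((q.derivative.eval x : ℝ) : ℂ) * Complex.I with hφ'def
  have hd : ∀ x : ℝ, HasDerivAt φ (φ' x) x := by
    intro x
    have hp' : HasDerivAt (fun y : ℝ => ((p.eval y : ℝ) : ℂ)) ((p.derivative.eval x : ℝ) : ℂ) x :=
      (p.hasDerivAt x).ofReal_comp
    have hq' : HasDerivAt (fun y : ℝ => ((q.eval y : ℝ) : ℂ)) ((q.derivative.eval x : ℝ) : ℂ) x :=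
      (q.hasDerivAt x).ofReal_comp
    exact hp'.add (hq'.mul_const Complex.I)
  have hc : Continuous φ' := by
    apply Continuous.add
    · exact Complex.continuous_ofReal.comp (p.derivative.continuous_aeval)
    · exact (Complex.continuous_ofReal.comp (q.derivative.continuous_aeval)).mul continuous_const
  have hφcont : Continuous φ := by
    apply Continuous.add
    · exact Complex.continuous_ofReal.comp (p.continuous_aeval)
    · exact (Complex.continuous_ofReal.comp (q.continuous_aeval)).mul continuous_const
  have hφclose : ∀ x ∈ Set.Icc (0:ℝ) t, ‖f₀ x - φ x‖ ≤ 2*δ := by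
    intro x hx
    have h1 := hp x hx
    have h2 := hq x hx
    have hre : f₀ x - φ x = (((f₀ x).re - p.eval x : ℝ) : ℂ)
        + (((f₀ x).im - q.eval x : ℝ) : ℂ) * Complex.I := by
      apply Complex.ext <;> simp [hφdef]
    rw [hre]
    calc ‖(((f₀ x).re - p.eval x : ℝ) : ℂ) + (((f₀ x).im - q.eval x : ℝ) : ℂ) * Complex.I‖
        ≤ ‖(((f₀ x).re - p.eval x : ℝ) : ℂ)‖ + ‖(((f₀ x).im - q.eval x : ℝ) : ℂ) * Complex.I‖ :=
          norm_add_le _ _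
      _ = |(f₀ x).re - p.eval x| + |(f₀ x).im - q.eval x| := by
          rw [norm_mul, Complex.norm_I, mul_one, Complex.norm_real, Complex.norm_real,
            Real.norm_eq_abs, Real.norm_eq_abs]
      _ ≤ δ + δ := by
          rw [abs_sub_comm, abs_sub_comm ((f₀ x).im)]
          exact add_le_add h1.le h2.le
      _ = 2*δ := by ring
  set K : ℝ := ‖φ t‖ + ‖φ 0‖ + ∫ τ in (0:ℝ)..t, ‖φ' τ‖ with hKdef
  have hKnn : 0 ≤ K := by
    have : 0 ≤ ∫ τ in (0:ℝ)..t, ‖φ' τ‖ :=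
      intervalIntegral.integral_nonneg ht0 (fun x _ => norm_nonneg _)
    positivity
  set M : ℝ := max 1 (4*(K+1)/ε) with hMdef
  have hM1 : (1:ℝ) ≤ M := le_max_left _ _
  have hMnn : (0:ℝ) ≤ M := by linarith
  have hR : ∀ᶠ k : ℂ in Bornology.cobounded ℂ, Real.sqrt M ≤ ‖k‖ :=
    tendsto_norm_cobounded_atTop.eventually (eventually_ge_atTop _)
  rw [Filter.eventually_inf_principal]
  filter_upwards [hR] with k hk hkQ
  -- set z
  set z : ℂ := k^2 with hzdef
  have hznorm : M ≤ ‖z‖ := by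
    have h1 : Real.sqrt M ^ 2 ≤ ‖k‖ ^ 2 := by
      apply pow_le_pow_left₀ (Real.sqrt_nonneg _) hk
    rw [Real.sq_sqrt hMnn] at h1
    calc M ≤ ‖k‖^2 := h1
      _ = ‖z‖ := by rw [hzdef, norm_pow]
  have hz1 : (1:ℝ) ≤ ‖z‖ := le_trans hM1 hznorm
  have hz0 : z ≠ 0 := by
    intro h
    rw [h, norm_zero] at hz1
    linarith
  have hzim : z.im ≤ 0 := by
    have : z.im = k.re * k.im + k.im * k.re := by
      rw [hzdef, pow_two, Complex.mul_im]
    rw [this]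
    nlinarith [hkQ.1, hkQ.2]
  -- abbreviation for the exponential
  set E : ℝ → ℂ := fun τ => Complex.exp (Complex.I * z * ((τ:ℂ) - (t:ℂ))) with hEdef
  have hEc : Continuous E := by
    apply Complex.continuous_exp.comp
    exact continuous_const.mul ((Complex.continuous_ofReal).sub continuous_const)
  -- integrability
  have hIg : IntervalIntegrable (fun τ => E τ * g τ) volume 0 t := by
    have h1 : IntegrableOn (fun τ => E τ * g τ) (Set.Icc 0 t) :=
      IntegrableOn.continuousOn_mul hEc.continuousOn hg isCompact_Icc
    have h2 : IntegrableOn (fun τ => E τ * g τ) (Set.uIcc 0 t) := by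
      rwa [Set.uIcc_of_le ht0]
    exact h2.intervalIntegrable
  have hIf₀ : IntervalIntegrable (fun τ => E τ * f₀ τ) volume 0 t :=
    ((hEc.mul hf₀cont).intervalIntegrable 0 t)
  have hIφ : IntervalIntegrable (fun τ => E τ * φ τ) volume 0 t :=
    ((hEc.mul hφcont).intervalIntegrable 0 t)
  have e1 : IntervalIntegrable (fun τ => E τ * (g τ - f₀ τ)) volume 0 t := by
    have heq : (fun τ => E τ * (g τ - f₀ τ)) = fun τ => E τ * g τ - E τ * f₀ τ := by
      ext τ; ring
    rw [heq]; exact hIg.sub hIf₀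
  have e2 : IntervalIntegrable (fun τ => E τ * (f₀ τ - φ τ)) volume 0 t :=
    (hEc.mul (hf₀cont.sub hφcont)).intervalIntegrable 0 t
  have hsplit : (∫ τ in (0:ℝ)..t, E τ * g τ)
      = (∫ τ in (0:ℝ)..t, E τ * (g τ - f₀ τ)) + (∫ τ in (0:ℝ)..t, E τ * (f₀ τ - φ τ))
        + (∫ τ in (0:ℝ)..t, E τ * φ τ) := by
    rw [← intervalIntegral.integral_add e1 e2, ← intervalIntegral.integral_add (e1.add e2) hIφ]
    congr 1; ext τ; ring
  -- term 1
  have hT1 : ‖∫ τ in (0:ℝ)..t, E τ * (g τ - f₀ τ)‖ ≤ ε/4 := by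
    refine (intervalIntegral.norm_integral_le_integral_norm ht0).trans ?_
    have step1 : (∫ τ in (0:ℝ)..t, ‖E τ * (g τ - f₀ τ)‖)
        ≤ ∫ τ in (0:ℝ)..t, ‖g τ - f₀ τ‖ := by
      apply intervalIntegral.integral_mono_on ht0 e1.norm
      · have : IntervalIntegrable (fun τ => g τ - f₀ τ) volume 0 t := by
          have hgI : IntervalIntegrable g volume 0 t := by
            have : IntegrableOn g (Set.uIcc 0 t) := by rwa [Set.uIcc_of_le ht0]
            exact this.intervalIntegrable
          exact hgI.sub (hf₀cont.intervalIntegrable 0 t)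
        exact this.norm
      · intro x hx
        rw [norm_mul]
        calc ‖E x‖ * ‖g x - f₀ x‖ ≤ 1 * ‖g x - f₀ x‖ :=
              mul_le_mul_of_nonneg_right (exp_bound hzim hx.2) (norm_nonneg _)
          _ = ‖g x - f₀ x‖ := one_mul _
    refine step1.trans ?_
    rw [intervalIntegral.integral_of_le ht0]
    have hcongr : (∫ τ in Set.Ioc (0:ℝ) t, ‖g τ - f₀ τ‖)
        = ∫ τ in Set.Ioc (0:ℝ) t, ‖f τ - f₀ τ‖ := by
      apply setIntegral_congr_fun measurableSet_Ioc
      intro x hx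
      show ‖g x - f₀ x‖ = ‖f x - f₀ x‖
      rw [hfdef, Set.indicator_of_mem (Set.Ioc_subset_Icc_self hx)]
    rw [hcongr]
    refine le_trans ?_ hf₀close
    exact setIntegral_le_integral (hfi.sub hf₀int).norm
      (Filter.Eventually.of_forall fun x => norm_nonneg _)
  -- term 2
  have hT2 : ‖∫ τ in (0:ℝ)..t, E τ * (f₀ τ - φ τ)‖ ≤ ε/4 := by
    have hb : ∀ x ∈ Set.uIoc (0:ℝ) t, ‖E x * (f₀ x - φ x)‖ ≤ 2*δ := by
      intro x hx
      rw [Set.uIoc_of_le ht0] at hx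
      have hx' : x ∈ Set.Icc (0:ℝ) t := Set.Ioc_subset_Icc_self hx
      rw [norm_mul]
      calc ‖E x‖ * ‖f₀ x - φ x‖ ≤ 1 * (2*δ) :=
            mul_le_mul (exp_bound hzim hx'.2) (hφclose x hx') (norm_nonneg _) zero_le_one
        _ = 2*δ := one_mul _
    refine (intervalIntegral.norm_integral_le_of_norm_le_const hb).trans ?_
    rw [sub_zero, abs_of_nonneg ht0, hδdef]
    have heq : 2 * (ε / (8 * (t + 1))) * t = ε * t / (4 * (t+1)) := by
      field_simp; ring
    rw [heq, div_le_div_iff₀ (by positivity) (by norm_num)]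
    nlinarith
  -- term 3
  have hT3 : ‖∫ τ in (0:ℝ)..t, E τ * φ τ‖ ≤ ε/4 := by
    have hkey := key_bound ht0 φ φ' hd hc hzim hz0
    refine hkey.trans ?_
    rw [← hKdef]
    rw [div_le_iff₀ (by linarith : (0:ℝ) < ‖z‖)]
    have h1 : 4*(K+1)/ε ≤ ‖z‖ := le_trans (le_max_right _ _) hznorm
    have h2 : ε/4 * (4*(K+1)/ε) ≤ ε/4 * ‖z‖ := by
      apply mul_le_mul_of_nonneg_left h1 (by linarith)
    have h3 : ε/4 * (4*(K+1)/ε) = K+1 := by field_simp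
    linarith
  calc ‖∫ τ in (0:ℝ)..t, Complex.exp (Complex.I * k ^ 2 * ((τ:ℂ) - (t:ℂ))) * g τ‖
      = ‖(∫ τ in (0:ℝ)..t, E τ * (g τ - f₀ τ)) + (∫ τ in (0:ℝ)..t, E τ * (f₀ τ - φ τ))
        + (∫ τ in (0:ℝ)..t, E τ * φ τ)‖ := by rw [← hsplit]
    _ ≤ ‖(∫ τ in (0:ℝ)..t, E τ * (g τ - f₀ τ)) + (∫ τ in (0:ℝ)..t, E τ * (f₀ τ - φ τ))‖
        + ‖∫ τ in (0:ℝ)..t, E τ * φ τ‖ := norm_add_le _ _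
    _ ≤ (‖∫ τ in (0:ℝ)..t, E τ * (g τ - f₀ τ)‖ + ‖∫ τ in (0:ℝ)..t, E τ * (f₀ τ - φ τ)‖)
        + ‖∫ τ in (0:ℝ)..t, E τ * φ τ‖ := by gcongr; exact norm_add_le _ _
    _ ≤ (ε/4 + ε/4) + ε/4 := by gcongr
    _ < ε := by linarith
end

section
/- Let q < 0 and suppose û₀⁽¹⁾, û₀⁽²⁾ are continuous on ℝ with |û₀⁽ʲ⁾(k)| ≤ C/(1+k²). Then for each fixed x ∈ ℝ, the integral u(x,t) = (1/2π)∫ e^{ikx−ik²t} û₀⁽¹⁾(k) dk − (1/2π)∫ e^{ikx−ik²t} (iq e^{-2ika} û₀⁽¹⁾(−k) − k û₀⁽²⁾(k))/(iq+k) dk satisfies u(x,t) → 0 as t → +∞. -/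
open MeasureTheory Filter Set Real

lemma norm_phase (z : ℂ) (hz : z.re = 0) : ‖Complex.exp z‖ = 1 := by
  rw [Complex.norm_exp, hz, Real.exp_zero]

lemma aux_decay (h : ℝ → ℂ) (D : ℝ) (hc : Continuous h)
    (hb : ∀ k : ℝ, ‖h k‖ ≤ D / (1 + k ^ 2)) (x : ℝ) :
    Tendsto (fun t : ℝ => ∫ k : ℝ, Complex.exp (Complex.I * (k : ℂ) * (x : ℂ)
        - Complex.I * (k : ℂ) ^ 2 * (t : ℂ)) * h k) atTop (nhds 0) := by
  have hD : ∀ k : ℝ, ‖h k‖ ≤ D * (1 + k ^ 2)⁻¹ := by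
    intro k; simpa [div_eq_mul_inv] using hb k
  -- generic integrability of phases times decaying factors
  have hint : ∀ (c : ℝ → ℂ) (h' : ℝ → ℂ), (∀ k, (c k).re = 0) → Continuous c →
      Continuous h' → (∀ k, ‖h' k‖ ≤ D * (1 + k ^ 2)⁻¹) →
      Integrable (fun k : ℝ => Complex.exp (c k) * h' k) := by
    intro c h' hc0 hcc hch hbb
    refine Integrable.mono' ((integrable_inv_one_add_sq).const_mul D)
      ((hcc.cexp.mul hch).aestronglyMeasurable) (Filter.Eventually.of_forall fun k => ?_)
    rw [norm_mul, norm_phase _ (hc0 k), one_mul]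
    exact hbb k
  have hbneg : ∀ k : ℝ, ‖h (-k)‖ ≤ D * (1 + k ^ 2)⁻¹ := by
    intro k; simpa [neg_sq] using hD (-k)
  set φ : ℝ → ℂ := fun k =>
    Complex.exp (Complex.I * (k : ℂ) * (x : ℂ)) * h k +
      Complex.exp (-(Complex.I * (k : ℂ) * (x : ℂ))) * h (-k) with hφ
  have hcc1 : Continuous fun k : ℝ => Complex.I * (k : ℂ) * (x : ℂ) :=
    (continuous_const.mul Complex.continuous_ofReal).mul continuous_const
  have hφint : Integrable φ :=
    (hint _ _ (fun k => by simp) hcc1 hc hD).add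
      (hint _ _ (fun k => by simp) hcc1.neg (hc.comp continuous_neg) hbneg)
  set ψ : ℝ → ℂ := fun u => ((2 * Real.sqrt u : ℝ))⁻¹ • φ (Real.sqrt u) with hψ
  set g : ℝ → ℂ := Set.indicator (Ioi 0) ψ with hg
  -- crucial pointwise identity for the substitution
  have hkey : ∀ t : ℝ, ∀ k ∈ Ioi (0:ℝ),
      ((|(2:ℝ)| * k ^ ((2:ℝ) - 1)) •
        (Complex.exp (-(Complex.I * ((k ^ (2:ℝ) : ℝ) : ℂ) * (t : ℂ))) * g (k ^ (2:ℝ))))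
        = Complex.exp (-(Complex.I * (k : ℂ) ^ 2 * (t : ℂ))) * φ k := by
    intro t k hk
    have hk0 : (0:ℝ) < k := hk
    have h2 : (k : ℝ) ^ (2:ℝ) = k ^ 2 := Real.rpow_two k
    have h1 : (k : ℝ) ^ ((2:ℝ) - 1) = k := by norm_num [Real.rpow_one]
    have hsq : (0:ℝ) < k ^ 2 := by positivity
    rw [h2, h1]
    have : g (k ^ 2) = ((2 * k : ℝ))⁻¹ • φ k := by
      rw [hg, Set.indicator_of_mem (mem_Ioi.2 hsq), hψ]
      simp [Real.sqrt_sq hk0.le]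
    have hne : (2 * k : ℝ) ≠ 0 := by positivity
    rw [this, abs_of_nonneg (by norm_num : (0:ℝ) ≤ 2), mul_smul_comm, smul_smul,
      mul_inv_cancel₀ hne, one_smul]
    push_cast
    ring_nf
  have hkey0 : ∀ k ∈ Ioi (0:ℝ),
      ((|(2:ℝ)| * k ^ ((2:ℝ) - 1)) • g (k ^ (2:ℝ))) = φ k := by
    intro k hk
    have hk0 : (0:ℝ) < k := hk
    have h2 : (k : ℝ) ^ (2:ℝ) = k ^ 2 := Real.rpow_two k
    have h1 : (k : ℝ) ^ ((2:ℝ) - 1) = k := by norm_num [Real.rpow_one]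
    have hsq : (0:ℝ) < k ^ 2 := by positivity
    rw [h2, h1]
    have hgk : g (k ^ 2) = ((2 * k : ℝ))⁻¹ • φ k := by
      rw [hg, Set.indicator_of_mem (mem_Ioi.2 hsq), hψ]
      simp [Real.sqrt_sq hk0.le]
    have hne : (2 * k : ℝ) ≠ 0 := by positivity
    rw [hgk, abs_of_nonneg (by norm_num : (0:ℝ) ≤ 2), smul_smul, mul_inv_cancel₀ hne, one_smul]
  -- integrability of g
  have hφIoi : IntegrableOn φ (Ioi 0) := hφint.integrableOn
  have gIoi : IntegrableOn g (Ioi 0) :=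
    (integrableOn_Ioi_comp_rpow_iff g two_ne_zero).1
      (hφIoi.congr_fun (fun k hk => (hkey0 k hk).symm) measurableSet_Ioi)
  have gint : Integrable g :=
    (integrable_indicator_iff measurableSet_Ioi).2
      (gIoi.congr_fun (fun u hu => (Set.indicator_of_mem hu ψ)) measurableSet_Ioi)
  -- splitting the line integral
  have hc2 : ∀ t : ℝ, Continuous fun k : ℝ =>
      Complex.I * (k : ℂ) * (x : ℂ) - Complex.I * (k : ℂ) ^ 2 * (t : ℂ) := fun t =>
    hcc1.sub ((continuous_const.mul (Complex.continuous_ofReal.pow 2)).mul continuous_const)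
  have hre2 : ∀ t k : ℝ,
      (Complex.I * (k : ℂ) * (x : ℂ) - Complex.I * (k : ℂ) ^ 2 * (t : ℂ)).re = 0 := by
    intro t k
    simp [pow_two]
  have hFint : ∀ t : ℝ, Integrable (fun k : ℝ => Complex.exp (Complex.I * (k : ℂ) * (x : ℂ)
      - Complex.I * (k : ℂ) ^ 2 * (t : ℂ)) * h k) := fun t =>
    hint _ _ (hre2 t) (hc2 t) hc hD
  have hsplit : ∀ t : ℝ, (∫ k : ℝ, Complex.exp (Complex.I * (k : ℂ) * (x : ℂ)
        - Complex.I * (k : ℂ) ^ 2 * (t : ℂ)) * h k)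
      = ∫ k in Ioi (0:ℝ), Complex.exp (-(Complex.I * (k : ℂ) ^ 2 * (t : ℂ))) * φ k := by
    intro t
    set F : ℝ → ℂ := fun k => Complex.exp (Complex.I * (k : ℂ) * (x : ℂ)
        - Complex.I * (k : ℂ) ^ 2 * (t : ℂ)) * h k with hF
    have hFi : Integrable F := hFint t
    have hFn : Integrable (fun k => F (-k)) := hFi.comp_neg
    rw [← intervalIntegral.integral_Iic_add_Ioi hFi.integrableOn hFi.integrableOn]
    have h1 : (∫ k in Iic (0:ℝ), F k) = ∫ k in Ioi (0:ℝ), F (-k) := by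
      rw [integral_comp_neg_Ioi]; norm_num
    rw [h1, ← integral_add hFn.integrableOn hFi.integrableOn]
    refine setIntegral_congr_fun measurableSet_Ioi (fun k _ => ?_)
    simp only [hF, hφ]
    push_cast
    rw [mul_add, ← mul_assoc, ← mul_assoc, ← Complex.exp_add, ← Complex.exp_add]
    ring_nf
  -- substitution u = k^2
  have hsubst : ∀ t : ℝ, (∫ k in Ioi (0:ℝ),
        Complex.exp (-(Complex.I * (k : ℂ) ^ 2 * (t : ℂ))) * φ k)
      = ∫ u : ℝ, Complex.exp (-(Complex.I * (u : ℂ) * (t : ℂ))) * g u := by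
    intro t
    have h2 := integral_comp_rpow_Ioi
      (fun u : ℝ => Complex.exp (-(Complex.I * (u : ℂ) * (t : ℂ))) * g u) two_ne_zero
    have h3 : (∫ k in Ioi (0:ℝ),
          Complex.exp (-(Complex.I * (k : ℂ) ^ 2 * (t : ℂ))) * φ k)
        = ∫ k in Ioi (0:ℝ), (|(2:ℝ)| * k ^ ((2:ℝ) - 1)) •
            (Complex.exp (-(Complex.I * ((k ^ (2:ℝ) : ℝ) : ℂ) * (t : ℂ))) * g (k ^ (2:ℝ))) :=
      (setIntegral_congr_fun measurableSet_Ioi (fun k hk => (hkey t k hk).symm))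
    rw [h3, h2]
    rw [← integral_indicator measurableSet_Ioi]
    congr 1
    funext u
    by_cases hu : u ∈ Ioi (0:ℝ)
    · simp [Set.indicator_of_mem hu]
    · simp [Set.indicator_of_notMem hu, hg]
  -- identification with the Fourier transform of g
  have hft : ∀ t : ℝ, (∫ u : ℝ, Complex.exp (-(Complex.I * (u : ℂ) * (t : ℂ))) * g u)
      = FourierTransform.fourier g (t / (2 * π)) := by
    intro t
    rw [Real.fourier_real_eq_integral_exp_smul]
    refine integral_congr_ae (Filter.Eventually.of_forall fun v => ?_)
    simp only [smul_eq_mul]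
    congr 2
    have hπ : (π : ℂ) ≠ 0 := by exact_mod_cast Real.pi_ne_zero
    push_cast
    field_simp
  have tend : Tendsto (fun t : ℝ => t / (2 * π)) atTop (cocompact ℝ) :=
    (Tendsto.atTop_div_const (by positivity) tendsto_id).mono_right _root_.atTop_le_cocompact
  exact ((Real.zero_at_infty_fourier g).comp tend).congr
    (fun t => ((hsplit t).trans ((hsubst t).trans (hft t))).symm)

/-- For `q < 0` and continuous `û₀⁽¹⁾, û₀⁽²⁾` with quadratic decay, for each
fixed `x` the solution formula tends to `0` as `t → +∞`. -/
theorem long_time_decay_q_neg (q a : ℝ) (hq : q < 0) (u1hat u2hat : ℝ → ℂ)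
    (h1c : Continuous u1hat) (h2c : Continuous u2hat) (C : ℝ)
    (hb1 : ∀ k : ℝ, ‖u1hat k‖ ≤ C / (1 + k ^ 2))
    (hb2 : ∀ k : ℝ, ‖u2hat k‖ ≤ C / (1 + k ^ 2)) (x : ℝ) :
    Tendsto
      (fun t : ℝ =>
        (1 / (2 * Real.pi) : ℂ) *
            (∫ k : ℝ, Complex.exp (Complex.I * (k : ℂ) * (x : ℂ)
              - Complex.I * (k : ℂ) ^ 2 * (t : ℂ)) * u1hat k)
          - (1 / (2 * Real.pi) : ℂ) *
            ∫ k : ℝ, Complex.exp (Complex.I * (k : ℂ) * (x : ℂ)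
                - Complex.I * (k : ℂ) ^ 2 * (t : ℂ)) *
              ((Complex.I * (q : ℂ) * Complex.exp (-2 * Complex.I * (k : ℂ) * (a : ℂ)) *
                  u1hat (-k) - (k : ℂ) * u2hat k) / (Complex.I * (q : ℂ) + (k : ℂ))))
      atTop (nhds 0) := by
  have hC : 0 ≤ C := by
    have h0 := (norm_nonneg (u1hat 0)).trans (hb1 0)
    norm_num at h0
    exact h0
  set h2 : ℝ → ℂ := fun k : ℝ =>
    (Complex.I * (q : ℂ) * Complex.exp (-2 * Complex.I * (k : ℂ) * (a : ℂ)) * u1hat (-k)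
      - (k : ℂ) * u2hat k) / (Complex.I * (q : ℂ) + (k : ℂ)) with hh2
  have hden : ∀ k : ℝ, Complex.I * (q : ℂ) + (k : ℂ) ≠ 0 := by
    intro k hk
    have him := congrArg Complex.im hk
    simp at him
    exact hq.ne him
  have hcont : Continuous h2 := by
    refine Continuous.div ?_ ?_ hden
    · exact ((continuous_const.mul
        (((continuous_const.mul Complex.continuous_ofReal).mul continuous_const).cexp)).mul
        (h1c.comp continuous_neg)).sub (Complex.continuous_ofReal.mul h2c)
    · exact continuous_const.add Complex.continuous_ofReal
  have hbound : ∀ k : ℝ, ‖h2 k‖ ≤ (2 * C) / (1 + k ^ 2) := by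
    intro k
    have hd : 0 < ‖Complex.I * (q : ℂ) + (k : ℂ)‖ := norm_pos_iff.2 (hden k)
    have him : |q| ≤ ‖Complex.I * (q : ℂ) + (k : ℂ)‖ := by
      have := Complex.abs_im_le_norm (Complex.I * (q : ℂ) + (k : ℂ))
      simpa using this
    have hre : |k| ≤ ‖Complex.I * (q : ℂ) + (k : ℂ)‖ := by
      have := Complex.abs_re_le_norm (Complex.I * (q : ℂ) + (k : ℂ))
      simpa using this
    have hpos : (0:ℝ) < 1 + k ^ 2 := by positivity
    have hquot : (0:ℝ) ≤ C / (1 + k ^ 2) := div_nonneg hC hpos.le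
    have h1 : ‖u1hat (-k)‖ ≤ C / (1 + k ^ 2) := by
      have := hb1 (-k); simpa [neg_sq] using this
    have hnum : ‖Complex.I * (q : ℂ) * Complex.exp (-2 * Complex.I * (k : ℂ) * (a : ℂ)) *
          u1hat (-k) - (k : ℂ) * u2hat k‖
        ≤ |q| * (C / (1 + k ^ 2)) + |k| * (C / (1 + k ^ 2)) := by
      refine (norm_sub_le _ _).trans (add_le_add ?_ ?_)
      · rw [norm_mul, norm_mul, norm_mul, norm_phase _ (by simp), Complex.norm_I, one_mul,
          mul_one, Complex.norm_real, Real.norm_eq_abs]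
        exact mul_le_mul_of_nonneg_left h1 (abs_nonneg q)
      · rw [norm_mul, Complex.norm_real, Real.norm_eq_abs]
        exact mul_le_mul_of_nonneg_left (hb2 k) (abs_nonneg k)
    rw [hh2, norm_div, div_le_iff₀ hd]
    calc ‖Complex.I * (q : ℂ) * Complex.exp (-2 * Complex.I * (k : ℂ) * (a : ℂ)) *
          u1hat (-k) - (k : ℂ) * u2hat k‖
        ≤ |q| * (C / (1 + k ^ 2)) + |k| * (C / (1 + k ^ 2)) := hnum
      _ ≤ ‖Complex.I * (q : ℂ) + (k : ℂ)‖ * (C / (1 + k ^ 2))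
            + ‖Complex.I * (q : ℂ) + (k : ℂ)‖ * (C / (1 + k ^ 2)) :=
          add_le_add (mul_le_mul_of_nonneg_right him hquot)
            (mul_le_mul_of_nonneg_right hre hquot)
      _ = 2 * C / (1 + k ^ 2) * ‖Complex.I * (q : ℂ) + (k : ℂ)‖ := by ring
  have T1 := aux_decay u1hat C h1c hb1 x
  have T2 := aux_decay h2 (2 * C) hcont hbound x
  have := (T1.const_mul ((1 / (2 * Real.pi) : ℂ))).sub
    (T2.const_mul ((1 / (2 * Real.pi) : ℂ)))
  simpa [hh2] using this
end

section
/- Suppose f : ℝ → ℂ is continuously differentiable with f, f′ ∈ L¹(ℝ) and |f(l)| ≤ C/(1+l²), |f′(l)| ≤ C/(1+l²). Then for every t > 0, |∫_{-∞}^{∞} e^{-itl²} f(l) dl| ≤ C′/√t for a constant C′ depending only on C. -/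
open MeasureTheory Set Filter

lemma phi_norm (t l : ℝ) : ‖Complex.exp (-Complex.I * (t : ℂ) * (l : ℂ) ^ 2)‖ = 1 := by
  rw [show -Complex.I * (t : ℂ) * (l : ℂ) ^ 2 = ((-(t * l ^ 2) : ℝ) : ℂ) * Complex.I by
    push_cast; ring]
  rw [Complex.norm_exp_ofReal_mul_I]

lemma phi_cont (t : ℝ) :
    Continuous fun l : ℝ => Complex.exp (-Complex.I * (t : ℂ) * (l : ℂ) ^ 2) := by
  continuity

lemma half_line (C t : ℝ) (ht : 0 < t) (f : ℝ → ℂ) (hf : ContDiff ℝ 1 f)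
    (hfi : Integrable f)
    (hfb : ∀ l : ℝ, ‖f l‖ ≤ C / (1 + l ^ 2))
    (hf'b : ∀ l : ℝ, ‖deriv f l‖ ≤ C / (1 + l ^ 2)) :
    ‖∫ l in Ioi ((Real.sqrt t)⁻¹), Complex.exp (-Complex.I * (t : ℂ) * (l : ℂ) ^ 2) * f l‖
      ≤ 2 * C / Real.sqrt t := by
  have hs : 0 < Real.sqrt t := Real.sqrt_pos.mpr ht
  set s := Real.sqrt t with hs_def
  set δ := s⁻¹ with hδ_def
  have hδ : 0 < δ := inv_pos.mpr hs
  have hC : 0 ≤ C := le_trans (norm_nonneg (f 0)) (by simpa using hfb 0)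
  have hss : s * s = t := Real.mul_self_sqrt ht.le
  set φ : ℝ → ℂ := fun l => Complex.exp (-Complex.I * (t : ℂ) * (l : ℂ) ^ 2) with hφ_def
  set c : ℂ := (-2 * Complex.I * (t : ℂ))⁻¹ with hc_def
  have htC : (t : ℂ) ≠ 0 := by exact_mod_cast ht.ne'
  have hden : (-2 * Complex.I * (t : ℂ)) ≠ 0 :=
    mul_ne_zero (mul_ne_zero (by norm_num) Complex.I_ne_zero) htC
  have hcnorm : ‖c‖ = (2 * t)⁻¹ := by
    rw [hc_def, norm_inv]
    congr 1
    simp [Complex.norm_real, abs_of_pos ht]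
  set h : ℝ → ℂ := fun l => c * (deriv f l / (l : ℂ) - f l / (l : ℂ) ^ 2) with hh_def
  set g : ℝ → ℂ := fun l => φ l * (c * f l / (l : ℂ)) with hg_def
  have hf' : Differentiable ℝ f := hf.differentiable one_ne_zero
  have hfc : Continuous f := hf.continuous
  have hf'c : Continuous (deriv f) := hf.continuous_deriv le_rfl
  -- derivative of g
  have hderiv : ∀ l ∈ Ici δ, HasDerivAt g (φ l * f l + φ l * h l) l := by
    intro l hl
    have hl0 : (0 : ℝ) < l := lt_of_lt_of_le hδ hl
    have hlC : (l : ℂ) ≠ 0 := by exact_mod_cast hl0.ne'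
    have h1 : HasDerivAt (fun x : ℝ => -Complex.I * (t : ℂ) * (x : ℂ) ^ 2)
        (-2 * Complex.I * t * l) l := by
      have := ((hasDerivAt_pow 2 (l : ℂ)).const_mul (-Complex.I * (t : ℂ))).comp_ofReal
      convert this using 1
      push_cast; ring
    have hφd : HasDerivAt φ (-2 * Complex.I * t * l * φ l) l := by
      simpa [hφ_def, mul_comm] using h1.cexp
    have hnum : HasDerivAt (fun x : ℝ => c * f x) (c * deriv f l) l :=
      ((hf' l).hasDerivAt).const_mul c
    have hid : HasDerivAt (fun x : ℝ => (x : ℂ)) 1 l := by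
      simpa using (hasDerivAt_id l).ofReal_comp
    have hu : HasDerivAt (fun x : ℝ => c * f x / (x : ℂ)) (h l) l := by
      have := hnum.div hid hlC
      refine this.congr_deriv ?_
      rw [hh_def, hc_def]
      field_simp
      ring
    have := hφd.mul hu
    refine this.congr_deriv ?_
    congr 1
    rw [hc_def]
    field_simp
  -- integrability pieces
  have hφf_int : Integrable (fun l : ℝ => φ l * f l) := by
    refine hfi.norm.mono' (((phi_cont t).mul hfc).aestronglyMeasurable) ?_
    filter_upwards with l
    rw [norm_mul, phi_norm]
    simp
  have hdom : IntegrableOn (fun l : ℝ => (2 * t)⁻¹ * (3 / 2 * C) * l ^ (-2 : ℝ)) (Ioi δ) :=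
    (integrableOn_Ioi_rpow_of_lt (by norm_num) hδ).const_mul _
  have hbound : ∀ l ∈ Ioi δ, ‖φ l * h l‖ ≤ (2 * t)⁻¹ * (3 / 2 * C) * l ^ (-2 : ℝ) := by
    intro l hl
    have hl0 : (0 : ℝ) < l := lt_trans hδ hl
    have hl2 : (0 : ℝ) < l ^ 2 := by positivity
    have h1l : (0 : ℝ) < 1 + l ^ 2 := by positivity
    have hnl : ‖(l : ℂ)‖ = l := by
      rw [Complex.norm_real, Real.norm_eq_abs, abs_of_pos hl0]
    have e1 : ‖deriv f l / (l : ℂ)‖ ≤ C / (2 * l ^ 2) := by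
      rw [norm_div, hnl]
      calc ‖deriv f l‖ / l ≤ (C / (1 + l ^ 2)) / l :=
            div_le_div_of_nonneg_right (hf'b l) hl0.le
        _ ≤ C / (2 * l ^ 2) := by
            rw [div_div]
            apply div_le_div_of_nonneg_left hC (by positivity)
            nlinarith [sq_nonneg (l - 1)]
    have e2 : ‖f l / (l : ℂ) ^ 2‖ ≤ C / l ^ 2 := by
      rw [norm_div, norm_pow, hnl]
      refine (div_le_div_of_nonneg_right (hfb l) hl2.le).trans ?_
      rw [div_div]
      apply div_le_div_of_nonneg_left hC hl2
      nlinarith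
    calc ‖φ l * h l‖ = ‖h l‖ := by rw [norm_mul, hφ_def, phi_norm, one_mul]
      _ ≤ ‖c‖ * (‖deriv f l / (l : ℂ)‖ + ‖f l / (l : ℂ) ^ 2‖) := by
          rw [hh_def, norm_mul]
          exact mul_le_mul_of_nonneg_left (norm_sub_le _ _) (norm_nonneg c)
      _ ≤ (2 * t)⁻¹ * (C / (2 * l ^ 2) + C / l ^ 2) := by
          rw [hcnorm]
          apply mul_le_mul_of_nonneg_left (add_le_add e1 e2) (by positivity)
      _ = (2 * t)⁻¹ * (3 / 2 * C) * l ^ (-2 : ℝ) := by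
          rw [Real.rpow_neg hl0.le, show ((2:ℝ)) = ((2:ℕ):ℝ) by norm_num, Real.rpow_natCast]
          field_simp
          ring
  have hφh_meas : AEStronglyMeasurable (fun l : ℝ => φ l * h l) (volume.restrict (Ioi δ)) := by
    apply ContinuousOn.aestronglyMeasurable ?_ measurableSet_Ioi
    apply ((phi_cont t).continuousOn).mul
    apply continuousOn_const.mul
    apply ContinuousOn.sub
    · exact (hf'c.continuousOn).div (Complex.continuous_ofReal.continuousOn)
        (fun x hx => by exact_mod_cast (lt_trans hδ hx).ne')
    · exact (hfc.continuousOn).div ((Complex.continuous_ofReal.pow 2).continuousOn)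
        (fun x hx => pow_ne_zero 2 (by exact_mod_cast (lt_trans hδ hx).ne'))
  have hφh_int : IntegrableOn (fun l : ℝ => φ l * h l) (Ioi δ) := by
    refine hdom.mono' hφh_meas ?_
    filter_upwards [ae_restrict_mem measurableSet_Ioi] with l hl
    exact hbound l hl
  -- limit of g at infinity
  have htend : Tendsto g atTop (nhds 0) := by
    have hb : ∀ᶠ l in atTop, ‖g l‖ ≤ (2 * t)⁻¹ * C * l⁻¹ := by
      filter_upwards [eventually_gt_atTop (0 : ℝ)] with l hl
      have hnl : ‖(l : ℂ)‖ = l := by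
        rw [Complex.norm_real, Real.norm_eq_abs, abs_of_pos hl]
      rw [hg_def]
      simp only
      rw [norm_mul, hφ_def, phi_norm, one_mul, norm_div, norm_mul, hnl, hcnorm]
      rw [div_eq_mul_inv, mul_assoc, mul_assoc ((2 * t)⁻¹) C l⁻¹]
      apply mul_le_mul_of_nonneg_left ?_ (by positivity)
      apply mul_le_mul_of_nonneg_right ?_ (by positivity)
      calc ‖f l‖ ≤ C / (1 + l ^ 2) := hfb l
        _ ≤ C := by
            apply div_le_self hC
            nlinarith
    have hlim : Tendsto (fun l : ℝ => (2 * t)⁻¹ * C * l⁻¹) atTop (nhds 0) := by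
      simpa using (tendsto_inv_atTop_zero (𝕜 := ℝ)).const_mul ((2 * t)⁻¹ * C)
    exact squeeze_zero_norm' hb hlim
  -- FTC
  have hsum_int : IntegrableOn (fun l : ℝ => φ l * f l + φ l * h l) (Ioi δ) :=
    (hφf_int.integrableOn).add hφh_int
  have FTC : ∫ l in Ioi δ, (φ l * f l + φ l * h l) = 0 - g δ :=
    integral_Ioi_of_hasDerivAt_of_tendsto' hderiv hsum_int htend
  have split : ∫ l in Ioi δ, φ l * f l = (0 - g δ) - ∫ l in Ioi δ, φ l * h l := by
    rw [← FTC, integral_add (hφf_int.integrableOn) hφh_int]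
    ring
  -- bound ‖g δ‖
  have hgδ : ‖g δ‖ ≤ C / (2 * s) := by
    have hnδ : ‖(δ : ℂ)‖ = δ := by
      rw [Complex.norm_real, Real.norm_eq_abs, abs_of_pos hδ]
    rw [hg_def]
    simp only
    rw [norm_mul, hφ_def, phi_norm, one_mul, norm_div, norm_mul, hnδ, hcnorm]
    have h1 : ‖f δ‖ ≤ C := by
      calc ‖f δ‖ ≤ C / (1 + δ ^ 2) := hfb δ
        _ ≤ C := div_le_self hC (by nlinarith)
    calc (2 * t)⁻¹ * ‖f δ‖ / δ ≤ (2 * t)⁻¹ * C / δ := by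
          apply div_le_div_of_nonneg_right ?_ hδ.le
          exact mul_le_mul_of_nonneg_left h1 (by positivity)
      _ = C / (2 * s) := by
          rw [hδ_def, ← hss]
          field_simp
  -- bound the remaining integral
  have hint_bound : ‖∫ l in Ioi δ, φ l * h l‖ ≤ 3 / 4 * C / s := by
    calc ‖∫ l in Ioi δ, φ l * h l‖ ≤ ∫ l in Ioi δ, ‖φ l * h l‖ :=
          norm_integral_le_integral_norm _
      _ ≤ ∫ l in Ioi δ, (2 * t)⁻¹ * (3 / 2 * C) * l ^ (-2 : ℝ) := by
          apply setIntegral_mono_on hφh_int.norm hdom measurableSet_Ioi hbound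
      _ = (2 * t)⁻¹ * (3 / 2 * C) * ∫ l in Ioi δ, l ^ (-2 : ℝ) := by
          rw [MeasureTheory.integral_const_mul]
      _ = 3 / 4 * C / s := by
          rw [integral_Ioi_rpow_of_lt (by norm_num) hδ]
          rw [hδ_def, ← hss]
          rw [show (-2 : ℝ) + 1 = -1 by norm_num, Real.rpow_neg_one]
          field_simp
          ring
  calc ‖∫ l in Ioi δ, φ l * f l‖ ≤ ‖g δ‖ + ‖∫ l in Ioi δ, φ l * h l‖ := by
        rw [split, zero_sub]
        calc ‖-g δ - ∫ l in Ioi δ, φ l * h l‖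
            ≤ ‖-g δ‖ + ‖∫ l in Ioi δ, φ l * h l‖ := norm_sub_le _ _
          _ = ‖g δ‖ + ‖∫ l in Ioi δ, φ l * h l‖ := by rw [norm_neg]
    _ ≤ C / (2 * s) + 3 / 4 * C / s := add_le_add hgδ hint_bound
    _ ≤ 2 * C / s := by
        have h54 : C / (2 * s) + 3 / 4 * C / s = 5 / 4 * C / s := by
          field_simp
          ring
        rw [h54]
        exact div_le_div_of_nonneg_right (by linarith) hs.le

/-- Stationary phase estimate: if `f` is `C¹` with `f, f′ ∈ L¹` and
`|f(l)|, |f′(l)| ≤ C/(1+l²)`, then `|∫ e^{-itl²} f(l) dl| ≤ C′/√t` for all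
`t > 0`, with `C′` depending only on `C`. -/
theorem stationary_phase_estimate (C : ℝ) :
    ∃ C' : ℝ, ∀ f : ℝ → ℂ, ContDiff ℝ 1 f → Integrable f → Integrable (deriv f) →
      (∀ l : ℝ, ‖f l‖ ≤ C / (1 + l ^ 2)) →
      (∀ l : ℝ, ‖deriv f l‖ ≤ C / (1 + l ^ 2)) →
      ∀ t : ℝ, 0 < t →
        ‖∫ l : ℝ, Complex.exp (-Complex.I * (t : ℂ) * (l : ℂ) ^ 2) * f l‖
          ≤ C' / Real.sqrt t := by
  refine ⟨6 * C, ?_⟩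
  intro f hf hfi hf'i hfb hf'b t ht
  have hs : 0 < Real.sqrt t := Real.sqrt_pos.mpr ht
  have hδ : 0 < (Real.sqrt t)⁻¹ := inv_pos.mpr hs
  have hC : 0 ≤ C := le_trans (norm_nonneg (f 0)) (by simpa using hfb 0)
  -- integrability of the full integrand
  have hφf_int : Integrable
      (fun l : ℝ => Complex.exp (-Complex.I * (t : ℂ) * (l : ℂ) ^ 2) * f l) := by
    refine hfi.norm.mono' (((phi_cont t).mul hf.continuous).aestronglyMeasurable) ?_
    filter_upwards with l
    rw [norm_mul, phi_norm]
    simp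
  -- the reflected function
  set F : ℝ → ℂ := fun l => f (-l) with hF_def
  have hFcd : ContDiff ℝ 1 F := hf.comp contDiff_neg
  have hFi : Integrable F := hfi.comp_neg
  have hFb : ∀ l : ℝ, ‖F l‖ ≤ C / (1 + l ^ 2) := by
    intro l
    have := hfb (-l)
    rwa [neg_sq] at this
  have hF'b : ∀ l : ℝ, ‖deriv F l‖ ≤ C / (1 + l ^ 2) := by
    intro l
    rw [hF_def]
    rw [deriv_comp_neg, norm_neg]
    have := hf'b (-l)
    rwa [neg_sq] at this
  -- evenness of the phase
  have hphi_even : ∀ x : ℝ,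
      Complex.exp (-Complex.I * (t : ℂ) * ((-x : ℝ) : ℂ) ^ 2)
        = Complex.exp (-Complex.I * (t : ℂ) * (x : ℂ) ^ 2) := by
    intro x
    congr 1
    push_cast
    ring
  -- the three pieces
  have hR : ‖∫ l in Set.Ioi (Real.sqrt t)⁻¹,
      Complex.exp (-Complex.I * (t : ℂ) * (l : ℂ) ^ 2) * f l‖ ≤ 2 * C / Real.sqrt t :=
    half_line C t ht f hf hfi hfb hf'b
  have hLhalf : ‖∫ l in Set.Ioi (Real.sqrt t)⁻¹,
      Complex.exp (-Complex.I * (t : ℂ) * (l : ℂ) ^ 2) * F l‖ ≤ 2 * C / Real.sqrt t :=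
    half_line C t ht F hFcd hFi hFb hF'b
  have hIic : ∫ l in Set.Iic (-(Real.sqrt t)⁻¹),
      Complex.exp (-Complex.I * (t : ℂ) * (l : ℂ) ^ 2) * f l
      = ∫ l in Set.Ioi (Real.sqrt t)⁻¹,
        Complex.exp (-Complex.I * (t : ℂ) * (l : ℂ) ^ 2) * F l := by
    rw [show Set.Ioi (Real.sqrt t)⁻¹ = Set.Ioi (-(-(Real.sqrt t)⁻¹)) by rw [neg_neg]]
    rw [← integral_comp_neg_Iic (-(Real.sqrt t)⁻¹)
      (fun y : ℝ => Complex.exp (-Complex.I * (t : ℂ) * (y : ℂ) ^ 2) * F y)]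
    apply setIntegral_congr_fun measurableSet_Iic
    intro x _
    simp only [hF_def, neg_neg]
    rw [hphi_even]
  have hL : ‖∫ l in Set.Iic (-(Real.sqrt t)⁻¹),
      Complex.exp (-Complex.I * (t : ℂ) * (l : ℂ) ^ 2) * f l‖ ≤ 2 * C / Real.sqrt t := by
    rw [hIic]; exact hLhalf
  have hM : ‖∫ l in Set.Ioc (-(Real.sqrt t)⁻¹) (Real.sqrt t)⁻¹,
      Complex.exp (-Complex.I * (t : ℂ) * (l : ℂ) ^ 2) * f l‖ ≤ 2 * C / Real.sqrt t := by
    have hfin : volume (Set.Ioc (-(Real.sqrt t)⁻¹) (Real.sqrt t)⁻¹) < ⊤ :=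
      measure_Ioc_lt_top
    have hb : ∀ x ∈ Set.Ioc (-(Real.sqrt t)⁻¹) (Real.sqrt t)⁻¹,
        ‖Complex.exp (-Complex.I * (t : ℂ) * (x : ℂ) ^ 2) * f x‖ ≤ C := by
      intro x _
      rw [norm_mul, phi_norm, one_mul]
      calc ‖f x‖ ≤ C / (1 + x ^ 2) := hfb x
        _ ≤ C := div_le_self hC (by nlinarith)
    have := norm_setIntegral_le_of_norm_le_const hfin hb
    refine this.trans ?_
    rw [Real.volume_real_Ioc_of_le (by linarith)]
    rw [show (Real.sqrt t)⁻¹ - -(Real.sqrt t)⁻¹ = 2 * (Real.sqrt t)⁻¹ by ring]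
    rw [div_eq_mul_inv]
    ring_nf
    nlinarith [mul_pos hδ hδ]
  -- split the real line
  have hsplit : ∫ l : ℝ, Complex.exp (-Complex.I * (t : ℂ) * (l : ℂ) ^ 2) * f l
      = (∫ l in Set.Iic (-(Real.sqrt t)⁻¹),
          Complex.exp (-Complex.I * (t : ℂ) * (l : ℂ) ^ 2) * f l)
        + ((∫ l in Set.Ioc (-(Real.sqrt t)⁻¹) (Real.sqrt t)⁻¹,
            Complex.exp (-Complex.I * (t : ℂ) * (l : ℂ) ^ 2) * f l)
          + ∫ l in Set.Ioi (Real.sqrt t)⁻¹,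
            Complex.exp (-Complex.I * (t : ℂ) * (l : ℂ) ^ 2) * f l) := by
    rw [← intervalIntegral.integral_Iic_add_Ioi hφf_int.integrableOn hφf_int.integrableOn]
    congr 1
    rw [← setIntegral_union (Set.Ioc_disjoint_Ioi le_rfl) measurableSet_Ioi
      hφf_int.integrableOn hφf_int.integrableOn]
    rw [Set.Ioc_union_Ioi_eq_Ioi (by linarith)]
  calc ‖∫ l : ℝ, Complex.exp (-Complex.I * (t : ℂ) * (l : ℂ) ^ 2) * f l‖
      ≤ 2 * C / Real.sqrt t + (2 * C / Real.sqrt t + 2 * C / Real.sqrt t) := by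
        rw [hsplit]
        refine (norm_add_le _ _).trans ?_
        gcongr
        exact (norm_add_le _ _).trans (by gcongr)
    _ ≤ 6 * C / Real.sqrt t := by
        rw [← add_div, ← add_div, div_le_div_iff₀ hs hs]
        ring_nf
        nlinarith [mul_pos hs hs]
end
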